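/- Let k be a field of characteristic ≠ 2, l/k a finite étale algebra, and (W, q_l) a non-degenerate quadratic space over l. Then W with q_k := Tr^l_k ∘ q_l is a non-degenerate quadratic space over k, there is a canonical embedding SO(q_l) ⊆ SO(q_k), and the spinor norm maps satisfy sn_{q_k}(g) = N^l_k(sn_{q_l}(g)) in k^×/(k^×)² for all g ∈ SO(q_l). -/

import Mathlib

/-- Reflection in a vector `v` whose length `q v` is a unit, for a quadratic form `q`
with values in the commutative ring `A`. -/
noncomputable def reflFun8 (A : Type*) {W : Type*} [CommRing A] [AddCommGroup W]
    [Module A W] (q : W → A) (v : W) (x : W) : W :=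
  x - (Ring.inverse (q v) * QuadraticMap.polar q x v) • v

/-- `g` is a product of an even number of reflections in vectors of unit length
`q (v i)`, with `s` the product of these lengths; i.e. `s` is a representative of the
spinor norm of `g` with respect to `q`. -/
noncomputable def IsSpinorNormRep (A : Type*) {W : Type*} [CommRing A] [AddCommGroup W]
    [Module A W] (q : W → A) (g : W → W) (s : A) : Prop :=
  ∃ (m : ℕ) (v : Fin (2 * m) → W), (∀ i, IsUnit (q (v i))) ∧
    g = (List.ofFn fun i => reflFun8 A q (v i)).foldr (· ∘ ·) id ∧
    s = ∏ i, q (v i)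

namespace Stmt8Aux

open Module

theorem foldr_comp_append {α : Type*} (L1 L2 : List (α → α)) :
    (L1 ++ L2).foldr (· ∘ ·) id = (L1.foldr (· ∘ ·) id) ∘ (L2.foldr (· ∘ ·) id) := by
  induction L1 with
  | nil => simp
  | cons f L ih =>
    simp only [List.cons_append, List.foldr_cons, ih]
    rfl

theorem foldr_comp_flatten {α : Type*} (Ls : List (List (α → α))) :
    Ls.flatten.foldr (· ∘ ·) id
      = (Ls.map (fun L => L.foldr (· ∘ ·) id)).foldr (· ∘ ·) id := by
  induction Ls with
  | nil => simp
  | cons L Ls ih =>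
    simp only [List.flatten_cons, foldr_comp_append, ih, List.map_cons, List.foldr_cons]

theorem ofFn_cast_map {α β : Type*} (L : List α) (f : α → β) {n : ℕ} (h : n = L.length) :
    List.ofFn (fun i : Fin n => f (L.get (Fin.cast h i))) = L.map f := by
  subst h
  simpa using List.ofFn_getElem_eq_map L f

section Quadratic

variable {k l W : Type*} [Field k] [CommRing l] [Algebra k l] [Module.Finite k l]
  [AddCommGroup W] [Module l W] [Module k W] [IsScalarTower k l W]

theorem tr_polar (ql : W → l) (x y : W) :
    QuadraticMap.polar (fun z => Algebra.trace k l (ql z)) x y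
      = Algebra.trace k l (QuadraticMap.polar ql x y) := by
  simp [QuadraticMap.polar, map_sub]

theorem refl_preserves (ql : W → l)
    (hsmul : ∀ (c : l) (x : W), ql (c • x) = c ^ 2 * ql x)
    (hbil : ∀ x : W, IsLinearMap l fun y => QuadraticMap.polar ql x y)
    {v : W} (hv : IsUnit (ql v)) (x : W) :
    ql (reflFun8 l ql v x) = ql x := by
  have key : ∀ t : l, ql (x - t • v)
      = ql x + t ^ 2 * ql v - t * QuadraticMap.polar ql x v := by
    intro t
    have hp : QuadraticMap.polar ql x ((-t) • v) = (-t) * QuadraticMap.polar ql x v := by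
      rw [(hbil x).map_smul]; rfl
    have hq : ql ((-t) • v) = t ^ 2 * ql v := by rw [hsmul]; ring
    calc ql (x - t • v) = ql (x + (-t) • v) := by rw [sub_eq_add_neg, neg_smul]
    _ = QuadraticMap.polar ql x ((-t) • v) + ql x + ql ((-t) • v) := by
        simp only [QuadraticMap.polar]; ring
    _ = ql x + t ^ 2 * ql v - t * QuadraticMap.polar ql x v := by rw [hp, hq]; ring
  simp only [reflFun8]
  rw [key]
  have hinv : Ring.inverse (ql v) * ql v = 1 := Ring.inverse_mul_cancel _ hv
  linear_combination (Ring.inverse (ql v) * QuadraticMap.polar ql x v ^ 2) * hinv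

theorem comp_preserves (ql : W → l)
    (hsmul : ∀ (c : l) (x : W), ql (c • x) = c ^ 2 * ql x)
    (hbil : ∀ x : W, IsLinearMap l fun y => QuadraticMap.polar ql x y)
    (J : List W) (hJ : ∀ w ∈ J, IsUnit (ql w)) (x : W) :
    ql (((J.map (reflFun8 l ql)).foldr (· ∘ ·) id) x) = ql x := by
  induction J with
  | nil => simp
  | cons w J ih =>
    simp only [List.map_cons, List.foldr_cons, Function.comp_apply]
    rw [refl_preserves ql hsmul hbil (hJ w List.mem_cons_self),
      ih (fun u hu => hJ u (List.mem_cons_of_mem _ hu))]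

open Matrix in
theorem block (hchar : (2 : k) ≠ 0)
    (hetale : (Algebra.traceForm k l).Nondegenerate)
    (ql : W → l)
    (hsmul : ∀ (c : l) (x : W), ql (c • x) = c ^ 2 * ql x)
    (hbil : ∀ x : W, IsLinearMap l fun y => QuadraticMap.polar ql x y)
    (v : W) (hc : IsUnit (ql v)) :
    ∃ e : Fin (finrank k l) → W,
      (∀ j, Algebra.trace k l (ql (e j)) ≠ 0) ∧
      reflFun8 l ql v
        = (List.ofFn fun j =>
            reflFun8 k (fun z => Algebra.trace k l (ql z)) (e j)).foldr (· ∘ ·) id ∧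
      ∃ P : k, P ≠ 0 ∧
        ∏ j, Algebra.trace k l (ql (e j))
          = Algebra.norm k (ql v)
              * (LinearMap.BilinForm.toMatrix (Module.finBasis k l)
                  (Algebra.traceForm k l)).det
              * P ^ 2 := by
  classical
  set d := finrank k l with hd
  set qk : W → k := fun z => Algebra.trace k l (ql z) with hqk
  set c := ql v with hcv
  -- the transferred rank-one bilinear form on l
  set B : LinearMap.BilinForm k l :=
    (Algebra.traceForm k l).compLeft (LinearMap.mulLeft k c) with hB
  have hBapp : ∀ u w : l, B u w = Algebra.trace k l (c * u * w) := by
    intro u w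
    simp [hB, LinearMap.BilinForm.compLeft_apply, Algebra.traceForm_apply,
      LinearMap.mulLeft_apply, mul_assoc]
  have hBsymm : B.IsSymm := by
    refine LinearMap.BilinForm.isSymm_def.mpr fun u w => ?_
    rw [hBapp, hBapp]
    congr 1
    ring
  have hBnd : LinearMap.SeparatingLeft B := by
    intro u hu
    have h0 : c * u = 0 := by
      apply hetale.1
      intro w
      have := hu w
      rw [hBapp] at this
      simpa [Algebra.traceForm_apply, mul_assoc] using this
    have : Ring.inverse c * (c * u) = u := by
      rw [← mul_assoc, Ring.inverse_mul_cancel _ hc, one_mul]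
    rw [← this, h0, mul_zero]
  have h2k : IsUnit (2 : k) := isUnit_iff_ne_zero.mpr hchar
  have h2l : IsUnit (2 : l) := by
    have := h2k.map (algebraMap k l)
    rwa [map_ofNat] at this
  have h2c : IsUnit (2 * c) := h2l.mul hc
  have Inv2 : Invertible (2 : k) := invertibleOfNonzero hchar
  obtain ⟨a, ha⟩ := LinearMap.BilinForm.exists_orthogonal_basis (LinearMap.BilinForm.isSymm_iff.mp hBsymm)
  have haij : ∀ i j : Fin d, i ≠ j → B (a i) (a j) = 0 := fun i j hij => ha hij
  have horth : ∀ i j : Fin d, i ≠ j → Algebra.trace k l (c * a i * a j) = 0 := by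
    intro i j hij
    rw [← hBapp]
    exact haij i j hij
  have hdiag : ∀ j, B (a j) (a j) ≠ 0 := by
    intro j hj
    refine a.ne_zero j (hBnd (a j) ?_)
    intro w
    have hw : B (a j) w = B (a j) (∑ r, a.repr w r • a r) := by rw [a.sum_repr w]
    rw [hw, map_sum]
    refine Finset.sum_eq_zero fun r _ => ?_
    rw [_root_.map_smul, smul_eq_mul]
    rcases eq_or_ne j r with rfl | hr
    · rw [hj, mul_zero]
    · rw [haij j r hr, mul_zero]
  have hqe : ∀ j, qk (a j • v) = B (a j) (a j) := by
    intro j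
    show Algebra.trace k l (ql (a j • v)) = _
    rw [hsmul, hBapp, ← hcv]
    congr 1
    ring
  -- the coefficient function
  set b : W → l := fun x => QuadraticMap.polar ql x v with hbdef
  have hvv : QuadraticMap.polar ql v v = 2 * c := by
    simp only [QuadraticMap.polar]
    rw [← two_smul l v, hsmul, ← hcv]
    ring
  have hbv : ∀ (x : W) (t : l), b (x - t • v) = b x - t * (2 * c) := by
    intro x t
    have h1 : b (x - t • v) = QuadraticMap.polar ql v (x + (-t) • v) := by
      rw [hbdef]
      simp only []
      rw [QuadraticMap.polar_comm, sub_eq_add_neg, neg_smul]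
    rw [h1, (hbil v).map_add, (hbil v).map_smul, hvv, QuadraticMap.polar_comm ql v x]
    show b x + (-t) * (2 * c) = b x - t * (2 * c)
    ring
  set G : Fin d → l → l := fun j β =>
    β - ((Ring.inverse (qk (a j • v)) * Algebra.trace k l (a j * β)) • a j) * (2 * c)
    with hGdef
  have hrefl_j : ∀ (j : Fin d) (x : W), reflFun8 k qk (a j • v) x
      = x - (Ring.inverse (2 * c) * (b x - G j (b x))) • v := by
    intro j x
    have hpolar : QuadraticMap.polar qk x (a j • v) = Algebra.trace k l (a j * b x) := by
      rw [hqk, tr_polar ql x (a j • v), (hbil x).map_smul, smul_eq_mul]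
    have hsc : Ring.inverse (2 * c) * (b x - G j (b x))
        = (Ring.inverse (qk (a j • v)) * Algebra.trace k l (a j * b x)) • a j := by
      rw [hGdef]
      simp only []
      rw [sub_sub_cancel, mul_comm (Ring.inverse (2 * c)), mul_assoc,
        Ring.mul_inverse_cancel _ h2c, mul_one]
    rw [hsc]
    show x - (Ring.inverse (qk (a j • v)) * QuadraticMap.polar qk x (a j • v)) • (a j • v) = _
    rw [hpolar, ← smul_assoc]
  have hQcomp : ∀ (f1 f2 : W → W) (g1 g2 : l → l),
      (∀ x, f1 x = x - (Ring.inverse (2 * c) * (b x - g1 (b x))) • v) →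
      (∀ x, f2 x = x - (Ring.inverse (2 * c) * (b x - g2 (b x))) • v) →
      ∀ x, (f1 ∘ f2) x = x - (Ring.inverse (2 * c) * (b x - g1 (g2 (b x)))) • v := by
    intro f1 f2 g1 g2 h1 h2 x
    have hb2 : b (f2 x) = g2 (b x) := by
      rw [h2 x, hbv]
      have hz : Ring.inverse (2 * c) * (b x - g2 (b x)) * (2 * c) = b x - g2 (b x) := by
        rw [mul_comm (Ring.inverse (2 * c)), mul_assoc, Ring.inverse_mul_cancel _ h2c, mul_one]
      rw [hz]
      ring
    rw [Function.comp_apply, h1 (f2 x), hb2, h2 x, sub_sub, ← add_smul, ← mul_add]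
    have hz : b x - g2 (b x) + (g2 (b x) - g1 (g2 (b x))) = b x - g1 (g2 (b x)) := by ring
    rw [hz]
  have hQfold : ∀ (J : List (Fin d)) (x : W),
      ((J.map (fun j => reflFun8 k qk (a j • v))).foldr (· ∘ ·) id) x
        = x - (Ring.inverse (2 * c) * (b x - ((J.map G).foldr (· ∘ ·) id) (b x))) • v := by
    intro J
    induction J with
    | nil => intro x; simp
    | cons j J ih =>
      intro x
      have := hQcomp (reflFun8 k qk (a j • v))
        ((J.map (fun j => reflFun8 k qk (a j • v))).foldr (· ∘ ·) id)
        (G j) ((J.map G).foldr (· ∘ ·) id) (hrefl_j j) ih x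
      simpa using this
  -- properties of the maps G j
  have hG0 : ∀ j, G j 0 = 0 := by intro j; simp [hGdef]
  have hGadd : ∀ (j : Fin d) (β γ : l), G j (β + γ) = G j β + G j γ := by
    intro j β γ
    simp only [hGdef, mul_add, map_add, add_smul, add_mul]
    abel
  have hGneg : ∀ (j : Fin d) (β : l), G j (-β) = -G j β := by
    intro j β
    have h := hGadd j β (-β)
    rw [add_neg_cancel, hG0] at h
    exact (neg_eq_of_add_eq_zero_right h.symm).symm
  have hGsmul : ∀ (j : Fin d) (r : k) (β : l), G j (r • β) = r • G j β := by
    intro j r β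
    have h1 : a j * (r • β) = r • (a j * β) := mul_smul_comm r (a j) β
    simp only [hGdef, h1, _root_.map_smul, smul_eq_mul, smul_sub]
    congr 1
    rw [mul_left_comm (Ring.inverse (qk (a j • v))) r, mul_smul, smul_mul_assoc]
  have hGfix : ∀ i j : Fin d, j ≠ i → G j (2 * c * a i) = 2 * c * a i := by
    intro i j hji
    have hT : Algebra.trace k l (a j * (2 * c * a i)) = 0 := by
      have h1 : a j * (2 * c * a i) = c * a i * a j + c * a i * a j := by ring
      rw [h1, map_add, horth i j (fun h => hji h.symm), add_zero]
    simp [hGdef, hT]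
  have hGflip : ∀ i : Fin d, G i (2 * c * a i) = -(2 * c * a i) := by
    intro i
    have hq : qk (a i • v) = Algebra.trace k l (c * a i * a i) := by rw [hqe i, hBapp]
    have ht0 : Algebra.trace k l (c * a i * a i) ≠ 0 := by
      rw [← hBapp]; exact hdiag i
    have hT : Algebra.trace k l (a i * (2 * c * a i))
        = Algebra.trace k l (c * a i * a i) + Algebra.trace k l (c * a i * a i) := by
      rw [← map_add]; congr 1; ring
    have hκ : Ring.inverse (qk (a i • v)) * Algebra.trace k l (a i * (2 * c * a i))
        = (2 : k) := by
      rw [hT, hq, Ring.inverse_eq_inv]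
      field_simp
      ring
    have h2smul : ((2 : k) • a i) = 2 * a i := by rw [Algebra.smul_def, map_ofNat]
    rw [hGdef]
    simp only []
    rw [hκ, h2smul]
    ring
  have hsign : ∀ (J : List (Fin d)) (i : Fin d),
      ((J.map G).foldr (· ∘ ·) id) (2 * c * a i)
        = (if Even (J.count i) then 2 * c * a i else -(2 * c * a i)) := by
    intro J i
    induction J with
    | nil => simp
    | cons j J ih =>
      simp only [List.map_cons, List.foldr_cons, Function.comp_apply, ih]
      rcases eq_or_ne j i with rfl | hji
      · rw [List.count_cons_self]
        by_cases he : Even (J.count j)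
        · simp [he, Nat.even_add_one, hGflip j]
        · simp [he, Nat.even_add_one, hGneg j, hGflip j]
      · rw [List.count_cons_of_ne hji]
        by_cases he : Even (J.count i)
        · simp [he, hGfix i j hji]
        · simp [he, hGneg j, hGfix i j hji]
  have hFprop : ∀ (J : List (Fin d)),
      (∀ β γ : l, ((J.map G).foldr (· ∘ ·) id) (β + γ)
          = ((J.map G).foldr (· ∘ ·) id) β + ((J.map G).foldr (· ∘ ·) id) γ)
      ∧ (∀ (r : k) (β : l), ((J.map G).foldr (· ∘ ·) id) (r • β)
          = r • ((J.map G).foldr (· ∘ ·) id) β) := by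
    intro J
    induction J with
    | nil => exact ⟨fun _ _ => rfl, fun _ _ => rfl⟩
    | cons j J ih =>
      simp only [List.map_cons, List.foldr_cons, Function.comp_apply]
      exact ⟨fun β γ => by rw [ih.1, hGadd], fun r β => by rw [ih.2, hGsmul]⟩
  have hGcomp : ∀ β : l, (((List.finRange d).map G).foldr (· ∘ ·) id) β = -β := by
    intro β
    have hβ : β = ∑ i, a.repr (Ring.inverse (2 * c) * β) i • (2 * c * a i) := by
      have h1 : 2 * c * (Ring.inverse (2 * c) * β) = β := by
        rw [← mul_assoc, Ring.mul_inverse_cancel _ h2c, one_mul]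
      calc β = 2 * c * (Ring.inverse (2 * c) * β) := h1.symm
      _ = 2 * c * (∑ i, a.repr (Ring.inverse (2 * c) * β) i • a i) := by rw [a.sum_repr]
      _ = ∑ i, a.repr (Ring.inverse (2 * c) * β) i • (2 * c * a i) := by
          rw [Finset.mul_sum]
          exact Finset.sum_congr rfl fun i _ => mul_smul_comm _ _ _
    have hFsum : ∀ (f : Fin d → l),
        (((List.finRange d).map G).foldr (· ∘ ·) id) (∑ i, f i)
          = ∑ i, (((List.finRange d).map G).foldr (· ∘ ·) id) (f i) :=
      fun f => map_sum (AddMonoidHom.mk' _ (fun β γ => (hFprop (List.finRange d)).1 β γ)) f _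
    conv_lhs => rw [hβ]
    rw [hFsum]
    have hterm : ∀ i : Fin d,
        (((List.finRange d).map G).foldr (· ∘ ·) id)
            (a.repr (Ring.inverse (2 * c) * β) i • (2 * c * a i))
          = a.repr (Ring.inverse (2 * c) * β) i • (-(2 * c * a i)) := by
      intro i
      rw [(hFprop (List.finRange d)).2, hsign (List.finRange d) i,
        List.count_eq_one_of_mem (List.nodup_finRange d) (List.mem_finRange i)]
      simp
    rw [Finset.sum_congr rfl fun i _ => hterm i]
    conv_rhs => rw [hβ]
    rw [← Finset.sum_neg_distrib]
    exact Finset.sum_congr rfl fun i _ => smul_neg _ _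
  -- the reflection decomposition
  have hcc : c * Ring.inverse c = 1 := Ring.mul_inverse_cancel _ hc
  have hreflv : reflFun8 l ql v
      = (List.ofFn fun j => reflFun8 k qk (a j • v)).foldr (· ∘ ·) id := by
    funext x
    rw [List.ofFn_eq_map, hQfold (List.finRange d) x, hGcomp]
    show x - (Ring.inverse (ql v) * QuadraticMap.polar ql x v) • v = _
    rw [← hcv]
    show x - (Ring.inverse c * b x) • v = _
    have hz : Ring.inverse (2 * c) * (b x - -b x) = Ring.inverse c * b x := by
      have h1 : b x - -b x = 2 * b x := by ring
      rw [h1]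
      apply h2c.mul_left_cancel
      rw [← mul_assoc, Ring.mul_inverse_cancel _ h2c, one_mul]
      linear_combination (-2 * b x) * hcc
    rw [hz]
  -- determinant computation
  set b₀ := Module.finBasis k l with hb₀
  set Gm := LinearMap.BilinForm.toMatrix b₀ (Algebra.traceForm k l) with hGm
  have hMB : LinearMap.BilinForm.toMatrix b₀ B = (Algebra.leftMulMatrix b₀ c)ᵀ * Gm := by
    ext i j
    rw [LinearMap.BilinForm.toMatrix_apply, Matrix.mul_apply, hBapp]
    have h1 : c * b₀ i * b₀ j = (∑ r, b₀.repr (c * b₀ i) r • b₀ r) * b₀ j := by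
      rw [b₀.sum_repr]
    rw [h1, Finset.sum_mul, map_sum]
    refine Finset.sum_congr rfl fun r _ => ?_
    rw [Matrix.transpose_apply, Algebra.leftMulMatrix_eq_repr_mul, hGm,
      LinearMap.BilinForm.toMatrix_apply, Algebra.traceForm_apply, smul_mul_assoc,
      _root_.map_smul, smul_eq_mul]
  have hdetMB : (LinearMap.BilinForm.toMatrix b₀ B).det = Algebra.norm k c * Gm.det := by
    rw [hMB, Matrix.det_mul, Matrix.det_transpose, Algebra.norm_eq_matrix_det b₀ c]
  have hdiagM : LinearMap.BilinForm.toMatrix a B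
      = Matrix.diagonal (fun j => B (a j) (a j)) := by
    ext i j
    rcases eq_or_ne i j with rfl | hij
    · simp [LinearMap.BilinForm.toMatrix_apply]
    · rw [LinearMap.BilinForm.toMatrix_apply, Matrix.diagonal_apply_ne _ hij]
      exact haij i j hij
  have hchange : LinearMap.BilinForm.toMatrix a B
      = (b₀.toMatrix a)ᵀ * LinearMap.BilinForm.toMatrix b₀ B * b₀.toMatrix a :=
    (LinearMap.BilinForm.toMatrix_mul_basis_toMatrix b₀ a B).symm
  set P := (b₀.toMatrix a).det with hP
  have hP0 : P ≠ 0 := by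
    have h1 : b₀.toMatrix a * a.toMatrix b₀ = 1 := Basis.toMatrix_mul_toMatrix_flip b₀ a
    have h2 := congrArg Matrix.det h1
    rw [Matrix.det_mul, Matrix.det_one] at h2
    exact left_ne_zero_of_mul_eq_one h2
  have hprod : ∏ j, B (a j) (a j) = Algebra.norm k c * Gm.det * P ^ 2 := by
    have h1 : ∏ j, B (a j) (a j) = (Matrix.diagonal (fun j => B (a j) (a j))).det :=
      (Matrix.det_diagonal).symm
    rw [h1, ← hdiagM, hchange, Matrix.det_mul, Matrix.det_mul, Matrix.det_transpose, hdetMB]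
    ring
  refine ⟨fun j => a j • v, ?_, hreflv, P, hP0, ?_⟩
  · intro j
    have := hqe j
    rw [hqk] at this
    simp only [] at this
    rw [this]
    exact hdiag j
  · have hall : ∀ j : Fin d, Algebra.trace k l (ql (a j • v)) = B (a j) (a j) := fun j => hqe j
    rw [Finset.prod_congr rfl fun j _ => hall j, hprod]

end Quadratic

end Stmt8Aux

theorem stmt_8 {k l W : Type*} [Field k] (hchar : (2 : k) ≠ 0)
    [CommRing l] [Algebra k l] [Module.Finite k l]
    (hetale : (Algebra.traceForm k l).Nondegenerate)
    [AddCommGroup W] [Module l W] [Module k W] [IsScalarTower k l W]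
    [Module.Finite l W]
    (ql : W → l)
    (hsmul : ∀ (c : l) (x : W), ql (c • x) = c ^ 2 * ql x)
    (hbil : ∀ x : W, IsLinearMap l fun y => QuadraticMap.polar ql x y)
    (hnd : ∀ x : W, (∀ y : W, QuadraticMap.polar ql x y = 0) → x = 0)
    (g : W → W) (s : l) (hg : IsSpinorNormRep l ql g s) :
    (∀ x : W, Algebra.trace k l (ql (g x)) = Algebra.trace k l (ql x)) ∧
    (∀ x : W,
      (∀ y : W, QuadraticMap.polar (fun z => Algebra.trace k l (ql z)) x y = 0) → x = 0) ∧
    (∃ c : k, c ≠ 0 ∧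
      IsSpinorNormRep k (fun z => Algebra.trace k l (ql z)) g
        (Algebra.norm k s * c ^ 2)) := by
  obtain ⟨m, v, hunit, hgeq, hseq⟩ := hg
  have hiso : ∀ x : W, ql (g x) = ql x := by
    intro x
    have hlist : (List.ofFn fun i => reflFun8 l ql (v i))
        = (List.ofFn v).map (reflFun8 l ql) := (List.map_ofFn (f := v) (g := reflFun8 l ql)).symm
    have hmem : ∀ w ∈ List.ofFn v, IsUnit (ql w) := by
      intro w hw
      obtain ⟨i, rfl⟩ := List.mem_ofFn.mp hw
      exact hunit i
    rw [hgeq, hlist]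
    exact Stmt8Aux.comp_preserves ql hsmul hbil _ hmem x
  refine ⟨fun x => by rw [hiso x], ?_, ?_⟩
  · intro x hx
    refine hnd x fun y => ?_
    by_contra hb0
    have h2 := hetale.1 (QuadraticMap.polar ql x y)
    have h3 : ¬ (∀ w, Algebra.traceForm k l (QuadraticMap.polar ql x y) w = 0) :=
      fun h => hb0 (h2 h)
    push_neg at h3
    obtain ⟨w, hw⟩ := h3
    apply hw
    have h4 : Algebra.trace k l (w * QuadraticMap.polar ql x y) = 0 := by
      have h5 := hx (w • y)
      rw [Stmt8Aux.tr_polar, (hbil x).map_smul, smul_eq_mul] at h5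
      exact h5
    rw [Algebra.traceForm_apply, mul_comm]
    exact h4
  · classical
    set qk : W → k := fun z => Algebra.trace k l (ql z) with hqk
    have hblock := fun i : Fin (2 * m) =>
      Stmt8Aux.block hchar hetale ql hsmul hbil (v i) (hunit i)
    choose e he1 he2 he3 using hblock
    choose P hP0 hPe using he3
    set δ := (LinearMap.BilinForm.toMatrix (Module.finBasis k l) (Algebra.traceForm k l)).det with hδdef
    have hδ0 : δ ≠ 0 := by
      rw [hδdef]
      exact (LinearMap.BilinForm.nondegenerate_iff_det_ne_zero (Module.finBasis k l)).mp hetale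
    set Ls : List (List W) := List.ofFn (fun i => List.ofFn (e i)) with hLs
    set L : List W := Ls.flatten with hLdef
    have hlen : 2 * (m * Module.finrank k l) = L.length := by
      rw [hLdef, List.length_flatten, hLs, List.map_ofFn]
      simp only [Function.comp, List.length_ofFn, List.sum_ofFn, Finset.sum_const,
        Finset.card_univ, Fintype.card_fin, smul_eq_mul]
      ring
    set v' : Fin (2 * (m * Module.finrank k l)) → W := fun i => L.get (Fin.cast hlen i)
      with hv'
    have hmemL : ∀ w ∈ L, Algebra.trace k l (ql w) ≠ 0 := by
      intro w hw
      rw [hLdef, List.mem_flatten] at hw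
      obtain ⟨li, hli, hwli⟩ := hw
      rw [hLs] at hli
      obtain ⟨i, rfl⟩ := List.mem_ofFn.mp hli
      obtain ⟨j, rfl⟩ := List.mem_ofFn.mp hwli
      exact he1 i j
    have hofn : (List.ofFn fun i => reflFun8 k qk (v' i)) = L.map (reflFun8 k qk) :=
      Stmt8Aux.ofFn_cast_map L (reflFun8 k qk) hlen
    refine ⟨δ ^ m * ∏ i, P i,
      mul_ne_zero (pow_ne_zero m hδ0) (Finset.prod_ne_zero_iff.mpr fun i _ => hP0 i),
      m * Module.finrank k l, v', ?_, ?_, ?_⟩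
    · intro i
      exact isUnit_iff_ne_zero.mpr (hmemL _ (L.get_mem _))
    · have key : (L.map (reflFun8 k qk)).foldr (· ∘ ·) id
          = (List.ofFn fun i => reflFun8 l ql (v i)).foldr (· ∘ ·) id := by
        rw [hLdef, List.map_flatten, Stmt8Aux.foldr_comp_flatten]
        congr 1
        rw [hLs, List.map_ofFn, List.map_ofFn]
        refine congrArg List.ofFn (funext fun i => ?_)
        show ((List.ofFn (e i)).map (reflFun8 k qk)).foldr (· ∘ ·) id = reflFun8 l ql (v i)
        rw [List.map_ofFn]
        exact (he2 i).symm
      rw [hofn, key]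
      exact hgeq
    · have hprod1 : ∏ i, qk (v' i) = (L.map qk).prod := by
        rw [← Stmt8Aux.ofFn_cast_map L qk hlen, List.prod_ofFn]
      have hprod2 : (L.map qk).prod
          = ∏ i : Fin (2 * m), (Algebra.norm k (ql (v i)) * δ * P i ^ 2) := by
        rw [hLdef, List.map_flatten, List.prod_flatten, hLs, List.map_ofFn, List.map_ofFn,
          List.prod_ofFn]
        refine Finset.prod_congr rfl fun i _ => ?_
        show ((List.ofFn (e i)).map qk).prod = _
        rw [List.map_ofFn, List.prod_ofFn]
        exact hPe i
      have hn : ∏ i : Fin (2 * m), Algebra.norm k (ql (v i))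
          = Algebra.norm k (∏ i : Fin (2 * m), ql (v i)) :=
        (map_prod (Algebra.norm k) (fun i => ql (v i)) Finset.univ).symm
      rw [hprod1, hprod2, Finset.prod_mul_distrib, Finset.prod_mul_distrib,
        hn, ← hseq, Finset.prod_const,
        Finset.card_univ, Fintype.card_fin, Finset.prod_pow]
      have hpow : δ ^ (2 * m) = (δ ^ m) ^ 2 := by
        rw [← pow_mul, Nat.mul_comm]
      rw [hpow]
      ring
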